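/- Let S = ∏_{n ≥ 1} Z/p^n Z with componentwise multiplication (p prime), and let x = (x_n) with x_n = p mod p^n. Then for every k ≥ 1, r(x^{k+1}) ≠ r(x^k), where r(s) = {(u,v) : su = sv}; consequently S as a right S-act is Hopfian but not strongly Hopfian. -/
import Mathlib


structure RAct (S : Type*) [Monoid S] (A : Type*) where
  act : A → S → A
  act_one : ∀ a, act a 1 = a
  act_mul : ∀ a s t, act a (s * t) = act (act a s) t

variable {S : Type*} [Monoid S] {A B : Type*}

/-- `f` is an S-act homomorphism from `M` to `N`. -/
def IsHom (M : RAct S A) (N : RAct S B) (f : A → B) : Prop :=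
  ∀ a s, f (M.act a s) = N.act (f a) s

/-- `f` is an S-act endomorphism of `M`. -/
def IsEnd (M : RAct S A) (f : A → A) : Prop := IsHom M M f

/-- `r` is a congruence on the S-act `M`. -/
def IsCong (M : RAct S A) (r : A → A → Prop) : Prop :=
  Equivalence r ∧ ∀ a b s, r a b → r (M.act a s) (M.act b s)

/-- The kernel congruence `K_f`. -/
def kerC {A : Type*} (f : A → A) : A → A → Prop := fun a b => f a = f b

/-- The image congruence `I_f = (im f × im f) ∪ Δ`. -/
def imC {A : Type*} (f : A → A) : A → A → Prop :=
  fun a b => a = b ∨ (a ∈ Set.range f ∧ b ∈ Set.range f)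

/-- The diagonal relation. -/
def diagR (A : Type*) : A → A → Prop := fun a b => a = b

/-- The full relation. -/
def fullR (A : Type*) : A → A → Prop := fun _ _ => True

/-- `M` is strongly Hopfian: the chain `K_f ⊆ K_{f²} ⊆ ⋯` stabilizes for every endomorphism. -/
def StronglyHopfian (M : RAct S A) : Prop :=
  ∀ f : A → A, IsEnd M f → ∃ n : ℕ, 1 ≤ n ∧ ∀ m, n ≤ m → kerC (f^[m]) = kerC (f^[n])

/-- `M` is strongly co-Hopfian: the chain `I_f ⊇ I_{f²} ⊇ ⋯` stabilizes for every endomorphism. -/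
def StronglyCoHopfian (M : RAct S A) : Prop :=
  ∀ f : A → A, IsEnd M f → ∃ n : ℕ, 1 ≤ n ∧ ∀ m, n ≤ m → imC (f^[m]) = imC (f^[n])

/-- `M` is Hopfian: every surjective endomorphism is injective. -/
def Hopfian (M : RAct S A) : Prop :=
  ∀ f : A → A, IsEnd M f → Function.Surjective f → Function.Injective f

/-- `M` is co-Hopfian: every injective endomorphism is surjective. -/
def CoHopfian (M : RAct S A) : Prop :=
  ∀ f : A → A, IsEnd M f → Function.Injective f → Function.Surjective f

/-- ACC on congruences. -/
def NoetherianAct (M : RAct S A) : Prop :=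
  ∀ c : ℕ → (A → A → Prop), (∀ n, IsCong M (c n)) →
    (∀ n a b, c n a b → c (n + 1) a b) → ∃ N, ∀ m, N ≤ m → c m = c N

/-- DCC on congruences. -/
def ArtinianAct (M : RAct S A) : Prop :=
  ∀ c : ℕ → (A → A → Prop), (∀ n, IsCong M (c n)) →
    (∀ n a b, c (n + 1) a b → c n a b) → ∃ N, ∀ m, N ≤ m → c m = c N

/-- The monoid `S` as a right act over itself. -/
def mulAct (S : Type*) [Monoid S] : RAct S S :=
  ⟨fun x s => x * s, mul_one, fun a s t => (mul_assoc a s t).symm⟩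
/-- The monoid `∏_{n ≥ 1} ℤ/pⁿℤ` (indexed so that coordinate `n : ℕ` is `ℤ/p^{n+1}ℤ`). -/
def Pprod (p : ℕ) : Type := ∀ n : ℕ, ZMod (p ^ (n + 1))

instance (p : ℕ) : CommMonoid (Pprod p) :=
  inferInstanceAs (CommMonoid (∀ n : ℕ, ZMod (p ^ (n + 1))))

/-- The element `x = (p mod pⁿ)ₙ`. -/
def xp (p : ℕ) : Pprod p := fun n => (p : ZMod (p ^ (n + 1)))

/-- For every `k ≥ 1`, `r(x^{k+1}) ≠ r(x^k)`; consequently `S_S` is Hopfian but not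
strongly Hopfian. -/

lemma pk_ne_zero (p k : ℕ) (hp : p.Prime) : ((p ^ k : ℕ) : ZMod (p ^ (k+1))) ≠ 0 := by
  have h1 : 0 < p ^ (k+1) := pow_pos hp.pos _
  haveI : NeZero (p ^ (k+1)) := ⟨h1.ne'⟩
  rw [Ne, ZMod.natCast_eq_zero_iff]
  intro h
  have h2 := Nat.le_of_dvd (pow_pos hp.pos k) h
  have h3 : p ^ k < p ^ (k+1) := Nat.pow_lt_pow_right hp.one_lt (Nat.lt_succ_self k)
  omega

theorem stmt14 (p : ℕ) (hp : p.Prime) :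
    (∀ k : ℕ, 1 ≤ k →
      (fun u v : Pprod p => xp p ^ k * u = xp p ^ k * v) ≠
      (fun u v : Pprod p => xp p ^ (k + 1) * u = xp p ^ (k + 1) * v)) ∧
    Hopfian (mulAct (Pprod p)) ∧ ¬ StronglyHopfian (mulAct (Pprod p)) := by
  have part1 : ∀ k : ℕ, 1 ≤ k →
      (fun u v : Pprod p => xp p ^ k * u = xp p ^ k * v) ≠
      (fun u v : Pprod p => xp p ^ (k + 1) * u = xp p ^ (k + 1) * v) := by
    intro k hk h
    set u : Pprod p := fun n => if k ≤ n then ((p ^ (n - k) : ℕ) : ZMod (p ^ (n+1))) else 0 with hu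
    set z : Pprod p := fun n => (0 : ZMod (p ^ (n+1))) with hz
    have h1 : xp p ^ (k+1) * u = xp p ^ (k+1) * z := by
      funext n
      show (xp p ^ (k+1)) n * u n = (xp p ^ (k+1)) n * z n
      have hzn : z n = 0 := rfl
      have hx : (xp p ^ (k+1)) n = (p : ZMod (p ^ (n+1))) ^ (k+1) := rfl
      rw [hzn, mul_zero]
      by_cases hkn : k ≤ n
      · have huv : u n = ((p ^ (n - k) : ℕ) : ZMod (p ^ (n+1))) := by
          simp [hu, hkn]
        rw [hx, huv]
        have : (p : ZMod (p^(n+1)))^(k+1) * ((p ^ (n - k) : ℕ) : ZMod (p^(n+1)))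
            = ((p ^ (n+1) : ℕ) : ZMod (p^(n+1))) := by
          push_cast
          rw [← pow_add]
          congr 1
          omega
        rw [this, ZMod.natCast_self]
      · have huv : u n = 0 := by simp [hu, hkn]
        rw [huv, mul_zero]
    have h2 := congrFun (congrFun h u) z
    have h3 : xp p ^ k * u = xp p ^ k * z := h2.symm ▸ h1
    have h4 := congrFun h3 k
    have hx : (xp p ^ k) k = (p : ZMod (p ^ (k+1))) ^ k := rfl
    have huk : u k = ((p ^ (k - k) : ℕ) : ZMod (p ^ (k+1))) := by simp [hu]
    have h5 : (xp p ^ k) k * u k = ((p ^ k : ℕ) : ZMod (p ^ (k+1))) := by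
      rw [hx, huk]
      push_cast
      rw [← pow_add]
      congr 1
      omega
    have h6 : (xp p ^ k) k * z k = 0 := mul_zero _
    rw [show (xp p ^ k * u) k = (xp p ^ k) k * u k from rfl,
        show (xp p ^ k * z) k = (xp p ^ k) k * z k from rfl, h5, h6] at h4
    exact pk_ne_zero p k hp h4
  refine ⟨part1, ?_, ?_⟩
  · intro f hf hs u v huv
    obtain ⟨b, hb⟩ := hs 1
    have key : ∀ s, f s = f 1 * s := by
      intro s
      have := hf 1 s
      simpa [mulAct] using this
    have hinv : f 1 * b = 1 := by rw [← key b, hb]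
    have h2 : f 1 * u = f 1 * v := by rw [← key, ← key, huv]
    calc u = b * (f 1 * u) := by rw [← mul_assoc, mul_comm b, hinv, one_mul]
      _ = b * (f 1 * v) := by rw [h2]
      _ = v := by rw [← mul_assoc, mul_comm b, hinv, one_mul]
  · intro hsh
    obtain ⟨n, hn1, hn⟩ := hsh (fun u => xp p * u) (by
      intro a s
      show xp p * (a * s) = (xp p * a) * s
      rw [mul_assoc])
    have hit : ∀ m u, (fun u => xp p * u)^[m] u = xp p ^ m * u := by
      intro m
      induction m with
      | zero => intro u; simp
      | succ m ih =>
        intro u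
        rw [Function.iterate_succ_apply, ih, pow_succ]
        show xp p ^ m * (xp p * u) = xp p ^ m * xp p * u
        rw [mul_assoc]
    have heq := hn (n+1) (Nat.le_succ n)
    apply part1 n hn1
    funext u v
    have e1 : kerC ((fun u => xp p * u)^[n+1]) u v ↔ (xp p ^ (n+1) * u = xp p ^ (n+1) * v) := by
      unfold kerC; rw [hit, hit]
    have e2 : kerC ((fun u => xp p * u)^[n]) u v ↔ (xp p ^ n * u = xp p ^ n * v) := by
      unfold kerC; rw [hit, hit]
    have := congrFun (congrFun heq u) v
    rw [eq_iff_iff] at this ⊢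
    rw [← e1, ← e2, this]
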